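/- Let M > 0 and λ > 0 be real numbers. Then there exist constants c₁, c₂ > 0, depending only on M and λ, such that for all real t > 1 and all x, z ∈ [0, M]: if t·((t⁻¹ + x²/4)² + z²) < λ⁻¹·((1 + x²/4)² + z²), then x < c₁·t^{-1/4} and z < c₂·t^{-1/2}. -/

import Mathlib

lemma power_decay_aux (n : ℕ) (hn : 0 < n) (a C t : ℝ) (ha : 0 ≤ a) (hC : 0 < C)
    (ht : 0 < t) (h : a ^ n * t < C) :
    a < C ^ ((1 : ℝ) / n) * t ^ (-(1 : ℝ) / n) := by
  have hCt : a ^ n < C / t := (lt_div_iff₀ ht).mpr h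
  have hct0 : (0 : ℝ) ≤ C / t := le_of_lt (div_pos hC ht)
  have hn' : ((n : ℝ)) ≠ 0 := by exact_mod_cast hn.ne'
  have key : a < (C / t) ^ ((1 : ℝ) / n) := by
    have hpow : ((C / t) ^ ((1 : ℝ) / n)) ^ n = C / t := by
      rw [← Real.rpow_natCast ((C / t) ^ ((1 : ℝ) / n)) n, ← Real.rpow_mul hct0,
        one_div, inv_mul_cancel₀ hn', Real.rpow_one]
    refine lt_of_pow_lt_pow_left₀ n (Real.rpow_nonneg hct0 _) ?_
    rw [hpow]; exact hCt
  calc a < (C / t) ^ ((1 : ℝ) / n) := key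
    _ = C ^ ((1 : ℝ) / n) * t ^ (-(1 : ℝ) / n) := by
        rw [Real.div_rpow hC.le ht.le, neg_div, Real.rpow_neg ht.le, div_eq_mul_inv]

/-- Real-variable content of Lemma 6.3: for `M, λ > 0` there are constants
`c₁, c₂ > 0`, depending only on `M` and `λ`, such that for all `t > 1` and all
`x, z ∈ [0, M]`, if `t·((t⁻¹ + x²/4)² + z²) < λ⁻¹·((1 + x²/4)² + z²)` then
`x < c₁·t^{-1/4}` and `z < c₂·t^{-1/2}`. -/
theorem power_decay_bounds (M lam : ℝ) (hM : 0 < M) (hlam : 0 < lam) :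
    ∃ c₁ > (0 : ℝ), ∃ c₂ > (0 : ℝ), ∀ t : ℝ, 1 < t →
      ∀ x z : ℝ, x ∈ Set.Icc 0 M → z ∈ Set.Icc 0 M →
        t * ((t⁻¹ + x ^ 2 / 4) ^ 2 + z ^ 2) < lam⁻¹ * ((1 + x ^ 2 / 4) ^ 2 + z ^ 2) →
        x < c₁ * t ^ (-(1 : ℝ) / 4) ∧ z < c₂ * t ^ (-(1 : ℝ) / 2) := by
  set K : ℝ := lam⁻¹ * ((1 + M ^ 2 / 4) ^ 2 + M ^ 2) with hKdef
  have hK : 0 < K := by positivity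
  refine ⟨(16 * K) ^ ((1 : ℝ) / 4), Real.rpow_pos_of_pos (by linarith) _,
    K ^ ((1 : ℝ) / 2), Real.rpow_pos_of_pos hK _, ?_⟩
  intro t ht x z hx hz h
  obtain ⟨hx0, hxM⟩ := hx
  obtain ⟨hz0, hzM⟩ := hz
  have ht0 : (0 : ℝ) < t := by linarith
  have htinv : (0 : ℝ) < t⁻¹ := inv_pos.mpr ht0
  have hlaminv : (0 : ℝ) ≤ lam⁻¹ := (inv_pos.mpr hlam).le
  have hRHS : lam⁻¹ * ((1 + x ^ 2 / 4) ^ 2 + z ^ 2) ≤ K := by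
    have h1 : (1 + x ^ 2 / 4) ^ 2 + z ^ 2 ≤ (1 + M ^ 2 / 4) ^ 2 + M ^ 2 := by
      nlinarith [pow_le_pow_left₀ hx0 hxM 2, pow_le_pow_left₀ hz0 hzM 2, sq_nonneg x, sq_nonneg M]
    exact mul_le_mul_of_nonneg_left h1 hlaminv
  have h2 : t * ((t⁻¹ + x ^ 2 / 4) ^ 2 + z ^ 2) < K := lt_of_lt_of_le h hRHS
  constructor
  · have hx4 : x ^ 4 * t < 16 * K := by
      nlinarith [mul_pos ht0 htinv, sq_nonneg x, mul_nonneg ht0.le (sq_nonneg z),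
        mul_nonneg (mul_nonneg ht0.le htinv.le) (sq_nonneg x),
        mul_pos (mul_pos ht0 htinv) htinv]
    have := power_decay_aux 4 (by norm_num) x (16 * K) t hx0 (by linarith) ht0 hx4
    simpa using this
  · have hz2 : z ^ 2 * t < K := by nlinarith [sq_nonneg (t⁻¹ + x ^ 2 / 4), mul_nonneg ht0.le (sq_nonneg (t⁻¹ + x ^ 2 / 4))]
    have := power_decay_aux 2 (by norm_num) z K t hz0 hK ht0 hz2
    simpa using this
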